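/- arXiv:2501.09516 — 4 statements merged into one kernel-verified Lean document; each statement's English description precedes it below -/
import Mathlib

section
/- Let f : ℝ^{n×r} → ℝ be continuously differentiable with L-Lipschitz gradient and h : ℝ^{n×r} → ℝ convex and L_h-Lipschitz; set F := f + h. Let 0 < κ₁ ≤ κ₂, σ ∈ (0,1), c₀ > 0, M₁, M₂ > 0, and let m be a nonnegative integer. Suppose sequences X_k ∈ St(n,r), V_k ∈ T_{X_k}, α_k ∈ [c₀,1], and self-adjoint linear maps B_k : ℝ^{n×r} → ℝ^{n×r} mapping T_{X_k} into itself satisfy for all k: (i) κ₁‖V‖² ≤ ⟨V, B_k V⟩ ≤ κ₂‖V‖² for all V ∈ T_{X_k}; (ii) V_k minimizes φ_k(V) := ⟨∇f(X_k),V⟩ + (1/2)⟨V, B_k V⟩ + h(X_k+V) over T_{X_k}; (iii) ‖X_{k+1} − X_k‖ ≤ M₁‖α_k V_k‖ and ‖X_{k+1} − X_k − α_k V_k‖ ≤ M₂‖α_k V_k‖²; (iv) F(X_{k+1}) ≤ max_{max(k−m,0) ≤ j ≤ k} F(X_j) − (σ/2) α_k ⟨V_k, B_k V_k⟩. Suppose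 further that X_k converges to X* ∈ St(n,r) and that there exist an index K₀, a constant η > L_h M₂, and vectors W_k ∈ T_{X_k} for k ≥ K₀ such that ‖X* − X_k − W_k‖ ≤ M₂‖W_k‖², F(X_k) − F(X*) ≥ η‖W_k‖², and f(X*) − f(X_k) ≥ ⟨∇f(X_k), W_k⟩. Then there exist an integer K ≥ K₀, μ > 0, and τ ∈ (0,1) such that F(X_k) − F(X*) ≤ μ τ^{k−K} (max_{max(K−m,0) ≤ j ≤ K} F(X_j) − F(X*)) for all k > K. -/
open Matrix Filter

/-- The trace inner product `⟨A, B⟩ = tr(AᵀB)` on `ℝ^{n×r}`. -/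
noncomputable def tinner {n r : ℕ} (A B : Matrix (Fin n) (Fin r) ℝ) : ℝ := (Aᵀ * B).trace

/-- `V` belongs to the tangent space `T_X = {V : VᵀX + XᵀV = 0}` of the Stiefel manifold at `X`. -/
def IsTangent {n r : ℕ} (X V : Matrix (Fin n) (Fin r) ℝ) : Prop := Vᵀ * X + Xᵀ * V = 0

-- The norm `‖·‖` (and the topology) below come from the Frobenius norm,
-- associated to the trace inner product.
attribute [local instance] Matrix.frobeniusNormedAddCommGroup Matrix.frobeniusNormedSpace

namespace Aux
variable {n r : ℕ}

lemma tinner_eq_sum (A B : Matrix (Fin n) (Fin r) ℝ) :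
    tinner A B = ∑ i, ∑ j, A i j * B i j := by
  unfold tinner
  rw [Matrix.trace]
  simp only [Matrix.diag, Matrix.mul_apply, Matrix.transpose_apply]
  rw [Finset.sum_comm]

lemma tinner_comm (A B : Matrix (Fin n) (Fin r) ℝ) : tinner A B = tinner B A := by
  simp only [tinner_eq_sum, mul_comm]

lemma tinner_add_right (A B C : Matrix (Fin n) (Fin r) ℝ) :
    tinner A (B + C) = tinner A B + tinner A C := by
  simp [tinner_eq_sum, Matrix.add_apply, mul_add, Finset.sum_add_distrib]

lemma tinner_add_left (A B C : Matrix (Fin n) (Fin r) ℝ) :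
    tinner (A + B) C = tinner A C + tinner B C := by
  simp [tinner_eq_sum, Matrix.add_apply, add_mul, Finset.sum_add_distrib]

lemma tinner_smul_right (a : ℝ) (A B : Matrix (Fin n) (Fin r) ℝ) :
    tinner A (a • B) = a * tinner A B := by
  simp only [tinner_eq_sum, Matrix.smul_apply, smul_eq_mul, Finset.mul_sum]
  congr 1; ext i; congr 1; ext j; ring

lemma tinner_smul_left (a : ℝ) (A B : Matrix (Fin n) (Fin r) ℝ) :
    tinner (a • A) B = a * tinner A B := by
  rw [tinner_comm, tinner_smul_right, tinner_comm]

lemma tinner_zero_right (A : Matrix (Fin n) (Fin r) ℝ) : tinner A 0 = 0 := by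
  simp [tinner_eq_sum]

lemma tinner_zero_left (A : Matrix (Fin n) (Fin r) ℝ) : tinner 0 A = 0 := by
  simp [tinner_eq_sum]

lemma tinner_sub_right (A B C : Matrix (Fin n) (Fin r) ℝ) :
    tinner A (B - C) = tinner A B - tinner A C := by
  simp [tinner_eq_sum, Matrix.sub_apply, mul_sub, Finset.sum_sub_distrib]

lemma tinner_sub_left (A B C : Matrix (Fin n) (Fin r) ℝ) :
    tinner (A - B) C = tinner A C - tinner B C := by
  simp [tinner_eq_sum, Matrix.sub_apply, sub_mul, Finset.sum_sub_distrib]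

lemma norm_sq_eq (A : Matrix (Fin n) (Fin r) ℝ) : ‖A‖ ^ 2 = ∑ i, ∑ j, (A i j) ^ 2 := by
  rw [Matrix.frobenius_norm_def]
  rw [← Real.rpow_natCast ((∑ i, ∑ j, ‖A i j‖ ^ (2:ℝ)) ^ (1/2 : ℝ)) 2]
  rw [← Real.rpow_mul (by positivity)]
  norm_num [Real.rpow_two, sq_abs]

lemma tinner_self (A : Matrix (Fin n) (Fin r) ℝ) : tinner A A = ‖A‖ ^ 2 := by
  rw [norm_sq_eq, tinner_eq_sum]; congr 1; ext i; congr 1; ext j; ring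

lemma abs_tinner_le (A B : Matrix (Fin n) (Fin r) ℝ) : |tinner A B| ≤ ‖A‖ * ‖B‖ := by
  have h1 : (tinner A B) ^ 2 ≤ (‖A‖ * ‖B‖) ^ 2 := by
    have cs := Finset.sum_mul_sq_le_sq_mul_sq Finset.univ (fun p : Fin n × Fin r => A p.1 p.2)
      (fun p : Fin n × Fin r => B p.1 p.2)
    have e1 : tinner A B = ∑ p : Fin n × Fin r, A p.1 p.2 * B p.1 p.2 := by
      rw [tinner_eq_sum, ← Finset.univ_product_univ, Finset.sum_product]
    have e2 : ‖A‖ ^ 2 = ∑ p : Fin n × Fin r, (A p.1 p.2) ^ 2 := by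
      rw [norm_sq_eq, ← Finset.univ_product_univ, Finset.sum_product]
    have e3 : ‖B‖ ^ 2 = ∑ p : Fin n × Fin r, (B p.1 p.2) ^ 2 := by
      rw [norm_sq_eq, ← Finset.univ_product_univ, Finset.sum_product]
    calc (tinner A B) ^ 2 ≤ (∑ p : Fin n × Fin r, (A p.1 p.2) ^ 2) *
        (∑ p : Fin n × Fin r, (B p.1 p.2) ^ 2) := by rw [e1]; exact cs
      _ = (‖A‖ * ‖B‖) ^ 2 := by rw [← e2, ← e3]; ring
  have h2 : (0:ℝ) ≤ ‖A‖ * ‖B‖ := by positivity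
  nlinarith [abs_nonneg (tinner A B), sq_abs (tinner A B)]

lemma tinner_le (A B : Matrix (Fin n) (Fin r) ℝ) : tinner A B ≤ ‖A‖ * ‖B‖ :=
  le_trans (le_abs_self _) (abs_tinner_le A B)

lemma tangent_zero (X : Matrix (Fin n) (Fin r) ℝ) : IsTangent X 0 := by
  simp [IsTangent]

lemma tangent_add {X V U : Matrix (Fin n) (Fin r) ℝ} (hV : IsTangent X V)
    (hU : IsTangent X U) : IsTangent X (V + U) := by
  unfold IsTangent at *
  rw [Matrix.transpose_add, Matrix.add_mul, Matrix.mul_add]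
  calc Vᵀ * X + Uᵀ * X + (Xᵀ * V + Xᵀ * U)
      = (Vᵀ * X + Xᵀ * V) + (Uᵀ * X + Xᵀ * U) := by abel
    _ = 0 := by rw [hV, hU]; simp

lemma tangent_smul {X V : Matrix (Fin n) (Fin r) ℝ} (hV : IsTangent X V) (a : ℝ) :
    IsTangent X (a • V) := by
  unfold IsTangent at *
  rw [Matrix.transpose_smul, Matrix.smul_mul, Matrix.mul_smul, ← smul_add, hV, smul_zero]

lemma tangent_sub {X V U : Matrix (Fin n) (Fin r) ℝ} (hV : IsTangent X V)
    (hU : IsTangent X U) : IsTangent X (V - U) := by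
  have := tangent_add hV (tangent_smul hU (-1))
  simpa [sub_eq_add_neg] using this

lemma descent (f : Matrix (Fin n) (Fin r) ℝ → ℝ)
    (g : Matrix (Fin n) (Fin r) ℝ → Matrix (Fin n) (Fin r) ℝ)
    (Lf : Matrix (Fin n) (Fin r) ℝ → (Matrix (Fin n) (Fin r) ℝ →L[ℝ] ℝ))
    (hf : ∀ Z, HasFDerivAt f (Lf Z) Z) (hGrad : ∀ Z V, Lf Z V = tinner (g Z) V)
    (L : ℝ) (hL : 0 ≤ L) (hLipg : ∀ A B, ‖g A - g B‖ ≤ L * ‖A - B‖)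
    (Xp Y : Matrix (Fin n) (Fin r) ℝ) :
    f Y - f Xp - tinner (g Xp) (Y - Xp) ≤ L * ‖Y - Xp‖ ^ 2 := by
  set s : Set (Matrix (Fin n) (Fin r) ℝ) := Metric.closedBall Xp ‖Y - Xp‖ with hs
  have hXs : Xp ∈ s := Metric.mem_closedBall_self (norm_nonneg _)
  have hYs : Y ∈ s := by simp [hs, Metric.mem_closedBall, dist_eq_norm]
  have hder : ∀ Z ∈ s, HasFDerivWithinAt (fun Z => f Z - (Lf Xp) Z) (Lf Z - Lf Xp) s Z := by
    intro Z _
    exact ((hf Z).sub ((Lf Xp).hasFDerivAt)).hasFDerivWithinAt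
  letI : Norm (Matrix (Fin n) (Fin r) ℝ →L[ℝ] ℝ) :=
    ContinuousLinearMap.hasOpNorm (E := Matrix (Fin n) (Fin r) ℝ) (F := ℝ)
  have hbound : ∀ Z ∈ s, ‖Lf Z - Lf Xp‖ ≤ L * ‖Y - Xp‖ := by
    intro Z hZ
    refine ContinuousLinearMap.opNorm_le_bound _ (by positivity) (fun U => ?_)
    have e : (Lf Z - Lf Xp) U = tinner (g Z - g Xp) U := by
      rw [tinner_sub_left, ← hGrad, ← hGrad]; rfl
    show ‖(Lf Z - Lf Xp) U‖ ≤ L * ‖Y - Xp‖ * ‖U‖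
    rw [e, Real.norm_eq_abs]
    calc |tinner (g Z - g Xp) U| ≤ ‖g Z - g Xp‖ * ‖U‖ := abs_tinner_le _ _
      _ ≤ (L * ‖Z - Xp‖) * ‖U‖ := by
          exact mul_le_mul_of_nonneg_right (hLipg _ _) (norm_nonneg _)
      _ ≤ (L * ‖Y - Xp‖) * ‖U‖ := by
          have h1 : ‖Z - Xp‖ ≤ ‖Y - Xp‖ := by
            simpa [dist_eq_norm] using Metric.mem_closedBall.mp hZ
          have h2 := mul_le_mul_of_nonneg_left h1 hL
          exact mul_le_mul_of_nonneg_right h2 (norm_nonneg _)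
  have key := (convex_closedBall Xp ‖Y - Xp‖).norm_image_sub_le_of_norm_hasFDerivWithin_le
    hder hbound hXs hYs
  have e2 : (fun Z => f Z - (Lf Xp) Z) Y - (fun Z => f Z - (Lf Xp) Z) Xp
      = f Y - f Xp - tinner (g Xp) (Y - Xp) := by
    simp only []
    rw [← hGrad]
    have : (Lf Xp) (Y - Xp) = (Lf Xp) Y - (Lf Xp) Xp := map_sub _ _ _
    rw [this]; ring
  calc f Y - f Xp - tinner (g Xp) (Y - Xp)
      ≤ |f Y - f Xp - tinner (g Xp) (Y - Xp)| := le_abs_self _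
    _ = ‖(fun Z => f Z - (Lf Xp) Z) Y - (fun Z => f Z - (Lf Xp) Z) Xp‖ := by
        rw [e2, Real.norm_eq_abs]
    _ ≤ L * ‖Y - Xp‖ * ‖Y - Xp‖ := key
    _ = L * ‖Y - Xp‖ ^ 2 := by ring

/-- Scaled bilinear bound for a self-adjoint map with nonneg quadratic form bounded by `κ₂`. -/
lemma bilin_bound {X : Matrix (Fin n) (Fin r) ℝ}
    (Bk : Matrix (Fin n) (Fin r) ℝ →ₗ[ℝ] Matrix (Fin n) (Fin r) ℝ) (κ₂ : ℝ)
    (hsa : ∀ U W, tinner U (Bk W) = tinner (Bk U) W)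
    (htan : ∀ W, IsTangent X W → IsTangent X (Bk W))
    (hlow : ∀ W, IsTangent X W → 0 ≤ tinner W (Bk W))
    (hupp : ∀ W, IsTangent X W → tinner W (Bk W) ≤ κ₂ * ‖W‖ ^ 2)
    {V U : Matrix (Fin n) (Fin r) ℝ} (hV : IsTangent X V) (hU : IsTangent X U)
    {s : ℝ} (hs : 0 < s) (hκ : 0 ≤ κ₂) :
    tinner (Bk V) U ≤ κ₂ * (s * ‖V‖ ^ 2 + s⁻¹ * ‖U‖ ^ 2) := by
  set a : ℝ := Real.sqrt s with ha
  have ha0 : 0 < a := Real.sqrt_pos.mpr hs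
  have ha2 : a ^ 2 = s := Real.sq_sqrt hs.le
  set Z : Matrix (Fin n) (Fin r) ℝ := a • V + a⁻¹ • U with hZ
  have hZt : IsTangent X Z := tangent_add (tangent_smul hV a) (tangent_smul hU a⁻¹)
  have expand : tinner Z (Bk Z) = a ^ 2 * tinner V (Bk V) + 2 * tinner (Bk V) U
      + (a⁻¹) ^ 2 * tinner U (Bk U) := by
    rw [hZ]
    rw [map_add, LinearMap.map_smul, LinearMap.map_smul]
    simp only [tinner_add_left, tinner_add_right, tinner_smul_left, tinner_smul_right]
    have e1 : tinner V (Bk U) = tinner (Bk V) U := hsa V U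
    have e2 : tinner U (Bk V) = tinner (Bk U) V := hsa U V
    have e3 : tinner (Bk U) V = tinner V (Bk U) := tinner_comm _ _
    have hainv : a * a⁻¹ = 1 := mul_inv_cancel₀ (ne_of_gt ha0)
    rw [e1, e2, e3, e1]
    field_simp
    ring
  have hub := hupp Z hZt
  have hlV := hlow V hV
  have hlU := hlow U hU
  have hnZ : ‖Z‖ ≤ a * ‖V‖ + a⁻¹ * ‖U‖ := by
    calc ‖Z‖ ≤ ‖a • V‖ + ‖a⁻¹ • U‖ := norm_add_le _ _
      _ = a * ‖V‖ + a⁻¹ * ‖U‖ := by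
          rw [norm_smul, norm_smul, Real.norm_eq_abs, Real.norm_eq_abs,
            abs_of_pos ha0, abs_of_pos (inv_pos.mpr ha0)]
  have hnZ2 : ‖Z‖ ^ 2 ≤ (a * ‖V‖ + a⁻¹ * ‖U‖) ^ 2 := by
    have := norm_nonneg Z
    nlinarith
  have hinv2 : (a⁻¹) ^ 2 = s⁻¹ := by
    rw [← ha2]; rw [inv_pow]
  have hamgm : 2 * (a * ‖V‖) * (a⁻¹ * ‖U‖) ≤ s * ‖V‖ ^ 2 + s⁻¹ * ‖U‖ ^ 2 := by
    have hsq := sq_nonneg (a * ‖V‖ - a⁻¹ * ‖U‖)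
    nlinarith [ha2, hinv2]
  have step1 : 2 * tinner (Bk V) U ≤ κ₂ * ‖Z‖ ^ 2 := by
    have n1 : 0 ≤ a ^ 2 * tinner V (Bk V) := mul_nonneg (sq_nonneg a) hlV
    have n2 : 0 ≤ a⁻¹ ^ 2 * tinner U (Bk U) := mul_nonneg (sq_nonneg a⁻¹) hlU
    linarith [expand, hub]
  have step2 : κ₂ * ‖Z‖ ^ 2 ≤ κ₂ * (a * ‖V‖ + a⁻¹ * ‖U‖) ^ 2 :=
    mul_le_mul_of_nonneg_left hnZ2 hκ
  have step3 : (a * ‖V‖ + a⁻¹ * ‖U‖) ^ 2 ≤ 2 * (s * ‖V‖ ^ 2 + s⁻¹ * ‖U‖ ^ 2) := by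
    nlinarith [hamgm, ha2, hinv2]
  have step4 := mul_le_mul_of_nonneg_left step3 hκ
  linarith

end Aux


set_option maxHeartbeats 1000000 in
theorem stmt12 {n r : ℕ} (f h : Matrix (Fin n) (Fin r) ℝ → ℝ)
    -- `f` is continuously differentiable with gradient function `g = ∇f`, which is `L`-Lipschitz
    (g : Matrix (Fin n) (Fin r) ℝ → Matrix (Fin n) (Fin r) ℝ)
    (Lf : Matrix (Fin n) (Fin r) ℝ → (Matrix (Fin n) (Fin r) ℝ →L[ℝ] ℝ))
    (hf : ∀ Z, HasFDerivAt f (Lf Z) Z) (hGrad : ∀ Z V, Lf Z V = tinner (g Z) V)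
    (L Lh κ₁ κ₂ σ c₀ M₁ M₂ : ℝ) (m : ℕ)
    (hLipg : ∀ A B, ‖g A - g B‖ ≤ L * ‖A - B‖)
    -- `h` is convex and `L_h`-Lipschitz
    (hconv : ConvexOn ℝ Set.univ h)
    (hLiph : ∀ A B, |h A - h B| ≤ Lh * ‖A - B‖)
    (hκ₁ : 0 < κ₁) (hκ₁₂ : κ₁ ≤ κ₂) (hσ : σ ∈ Set.Ioo (0 : ℝ) 1)
    (hc₀ : 0 < c₀) (hM₁ : 0 < M₁) (hM₂ : 0 < M₂)
    -- the sequences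
    (X V : ℕ → Matrix (Fin n) (Fin r) ℝ) (α : ℕ → ℝ)
    (B : ℕ → (Matrix (Fin n) (Fin r) ℝ →ₗ[ℝ] Matrix (Fin n) (Fin r) ℝ))
    (hXSt : ∀ k, (X k)ᵀ * X k = 1)
    (hVt : ∀ k, IsTangent (X k) (V k))
    (hα : ∀ k, α k ∈ Set.Icc c₀ 1)
    -- each `B_k` is self-adjoint and maps `T_{X_k}` into itself
    (hBsa : ∀ k U W, tinner U (B k W) = tinner (B k U) W)
    (hBtan : ∀ k W, IsTangent (X k) W → IsTangent (X k) (B k W))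
    -- (i) uniform bounds on the quadratic form of `B_k` over `T_{X_k}`
    (hBbound : ∀ k W, IsTangent (X k) W →
      κ₁ * ‖W‖ ^ 2 ≤ tinner W (B k W) ∧ tinner W (B k W) ≤ κ₂ * ‖W‖ ^ 2)
    -- (ii) `V_k` minimizes `φ_k` over `T_{X_k}`
    (hmin : ∀ k W, IsTangent (X k) W →
      tinner (g (X k)) (V k) + (1 / 2) * tinner (V k) (B k (V k)) + h (X k + V k) ≤
        tinner (g (X k)) W + (1 / 2) * tinner W (B k W) + h (X k + W))
    -- (iii)
    (hstep₁ : ∀ k, ‖X (k + 1) - X k‖ ≤ M₁ * ‖α k • V k‖)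
    (hstep₂ : ∀ k, ‖X (k + 1) - X k - α k • V k‖ ≤ M₂ * ‖α k • V k‖ ^ 2)
    -- (iv) nonmonotone sufficient decrease
    (hdec : ∀ k, f (X (k + 1)) + h (X (k + 1)) ≤
      (Finset.Icc (k - m) k).sup' (Finset.nonempty_Icc.mpr (Nat.sub_le k m))
          (fun j => f (X j) + h (X j))
        - σ / 2 * α k * tinner (V k) (B k (V k)))
    -- `X_k` converges to `X* ∈ St(n,r)`
    (Xs : Matrix (Fin n) (Fin r) ℝ) (hXsSt : Xsᵀ * Xs = 1)
    (hXconv : Tendsto X atTop (nhds Xs))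
    -- the local structure hypotheses near `X*`
    (K₀ : ℕ) (η : ℝ) (hη : Lh * M₂ < η)
    (W : ℕ → Matrix (Fin n) (Fin r) ℝ)
    (hWt : ∀ k, K₀ ≤ k → IsTangent (X k) (W k))
    (hW₁ : ∀ k, K₀ ≤ k → ‖Xs - X k - W k‖ ≤ M₂ * ‖W k‖ ^ 2)
    (hW₂ : ∀ k, K₀ ≤ k → η * ‖W k‖ ^ 2 ≤ (f (X k) + h (X k)) - (f Xs + h Xs))
    (hW₃ : ∀ k, K₀ ≤ k → tinner (g (X k)) (W k) ≤ f Xs - f (X k)) :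
    ∃ K : ℕ, K₀ ≤ K ∧ ∃ μ τ : ℝ, 0 < μ ∧ τ ∈ Set.Ioo (0 : ℝ) 1 ∧
      ∀ k, K < k →
        (f (X k) + h (X k)) - (f Xs + h Xs) ≤
          μ * τ ^ (k - K) *
            ((Finset.Icc (K - m) K).sup' (Finset.nonempty_Icc.mpr (Nat.sub_le K m))
                (fun j => f (X j) + h (X j)) - (f Xs + h Xs)) := by
  classical
  -- degenerate case r = 0
  rcases Nat.eq_zero_or_pos r with hr | hr
  · subst hr
    have hXX : ∀ Z Z' : Matrix (Fin n) (Fin 0) ℝ, Z = Z' := by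
      intro Z Z'; ext i j; exact j.elim0
    refine ⟨K₀, le_refl _, 1, 1/2, one_pos, ⟨by norm_num, by norm_num⟩, ?_⟩
    intro k hk
    have h1 : X k = Xs := hXX _ _
    have h2 : (Finset.Icc (K₀ - m) K₀).sup' (Finset.nonempty_Icc.mpr (Nat.sub_le K₀ m))
        (fun j => f (X j) + h (X j)) = f Xs + h Xs := by
      apply le_antisymm
      · apply Finset.sup'_le
        intro j _
        rw [hXX (X j) Xs]
      · have hKmem : K₀ ∈ Finset.Icc (K₀ - m) K₀ :=
          Finset.mem_Icc.mpr ⟨Nat.sub_le _ _, le_refl _⟩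
        have := Finset.le_sup' (fun j => f (X j) + h (X j)) hKmem
        rw [hXX (X K₀) Xs] at this
        exact this
    rw [h1, h2]
    simp
  -- degenerate case n = 0
  rcases Nat.eq_zero_or_pos n with hn | hn
  · subst hn
    exfalso
    have h1 := hXSt 0
    have h2 := congrFun (congrFun h1 ⟨0, hr⟩) ⟨0, hr⟩
    rw [Matrix.mul_apply] at h2
    simp only [Matrix.one_apply_eq] at h2
    have h3 : (∑ j : Fin 0, (X 0)ᵀ ⟨0, hr⟩ j * X 0 j ⟨0, hr⟩) = 0 := by
      simp
    rw [h3] at h2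
    exact zero_ne_one h2
  -- ===== main case =====
  obtain ⟨hσ0, hσ1⟩ := hσ
  have hκ₂pos : 0 < κ₂ := lt_of_lt_of_le hκ₁ hκ₁₂
  -- nonnegativity of the Lipschitz constants
  obtain ⟨A₁, hA₁def⟩ : ∃ x : Matrix (Fin n) (Fin r) ℝ, x = Matrix.of (fun _ _ => (1:ℝ)) := ⟨_, rfl⟩
  have hA₀ : (0:ℝ) < ‖A₁ - (0 : Matrix (Fin n) (Fin r) ℝ)‖ := by
    rw [sub_zero]
    rw [norm_pos_iff]
    intro hEq
    have h1 := congrFun (congrFun hEq ⟨0, hn⟩) ⟨0, hr⟩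
    rw [hA₁def] at h1
    simpa using h1
  have hL0 : 0 ≤ L := by
    have h1 := hLipg A₁ 0
    have h2 := norm_nonneg (g A₁ - g 0)
    nlinarith
  have hLh0 : 0 ≤ Lh := by
    have h1 := hLiph A₁ 0
    have h2 := abs_nonneg (h A₁ - h 0)
    nlinarith
  have hηpos : 0 < η := lt_of_le_of_lt (mul_nonneg hLh0 hM₂.le) hη
  -- abbreviations
  obtain ⟨Fs, hFsdef⟩ : ∃ x : ℝ, x = f Xs + h Xs := ⟨_, rfl⟩
  obtain ⟨Δ, hΔdef⟩ : ∃ x : ℕ → ℝ, x = fun k => (f (X k) + h (X k)) - Fs := ⟨_, rfl⟩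
  obtain ⟨S, hSdef⟩ : ∃ x : ℕ → ℝ, x = fun k => (Finset.Icc (k - m) k).sup' (Finset.nonempty_Icc.mpr (Nat.sub_le k m)) (fun j => f (X j) + h (X j)) := ⟨_, rfl⟩
  obtain ⟨Γ, hΓdef⟩ : ∃ x : ℕ → ℝ, x = fun k => S k - Fs := ⟨_, rfl⟩
  have hΔk : ∀ k, Δ k = (f (X k) + h (X k)) - Fs := fun k => by rw [hΔdef]
  have hΓk : ∀ k, Γ k = S k - Fs := fun k => by rw [hΓdef]
  -- constants
  obtain ⟨c, hcdef⟩ : ∃ x : ℝ, x = 1 - Lh * M₂ / η := ⟨_, rfl⟩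
  have hc0 : 0 < c := by
    have h1 : Lh * M₂ / η < 1 := (div_lt_one hηpos).mpr hη
    rw [hcdef]; linarith
  have hc1 : c ≤ 1 := by
    have h1 : 0 ≤ Lh * M₂ / η := div_nonneg (mul_nonneg hLh0 hM₂.le) hηpos.le
    rw [hcdef]; linarith
  have hcη : (1 - c) * η = Lh * M₂ := by
    rw [hcdef]; field_simp; ring
  obtain ⟨G, hGdef⟩ : ∃ x : ℝ, x = ‖g Xs‖ + L := ⟨_, rfl⟩
  have hG0 : 0 ≤ G := by rw [hGdef]; positivity
  obtain ⟨t, htdef⟩ : ∃ x : ℝ, x = min 1 (c * η / (4 * κ₂)) := ⟨_, rfl⟩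
  have ht0 : 0 < t := by rw [htdef]; exact lt_min one_pos (by positivity)
  have ht1 : t ≤ 1 := by rw [htdef]; exact min_le_left _ _
  have htκ : t * κ₂ ≤ c * η / 4 := by
    have h1 : t ≤ c * η / (4 * κ₂) := by rw [htdef]; exact min_le_right _ _
    have h2 := mul_le_mul_of_nonneg_right h1 hκ₂pos.le
    calc t * κ₂ ≤ c * η / (4 * κ₂) * κ₂ := h2
      _ = c * η / 4 := by field_simp
  obtain ⟨s, hsdef⟩ : ∃ x : ℝ, x = 4 * κ₂ / (c * η) := ⟨_, rfl⟩
  have hs0 : 0 < s := by rw [hsdef]; positivity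
  have hsinv : κ₂ * s⁻¹ = c * η / 4 := by
    rw [hsdef]; field_simp
  -- the index K
  obtain ⟨N, hN⟩ := Metric.tendsto_atTop.mp hXconv 1 one_pos
  obtain ⟨K, hKdef⟩ : ∃ x : ℕ, x = max K₀ N := ⟨_, rfl⟩
  have hKK₀ : K₀ ≤ K := by rw [hKdef]; exact le_max_left _ _
  -- gradient bound near the limit
  have hGbnd : ∀ k, K ≤ k → ‖g (X k)‖ ≤ G := by
    intro k hk
    have h1 : ‖g (X k) - g Xs‖ ≤ L * ‖X k - Xs‖ := hLipg _ _
    have h2 : ‖X k - Xs‖ ≤ 1 := by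
      have hk' : N ≤ k := le_trans (le_max_right K₀ N) (by rw [← hKdef]; exact hk)
      have h3 := hN k hk'
      rw [dist_eq_norm] at h3
      linarith
    have h4 : ‖g (X k)‖ ≤ ‖g Xs‖ + ‖g (X k) - g Xs‖ := by
      calc ‖g (X k)‖ = ‖g Xs + (g (X k) - g Xs)‖ := by congr 1; abel
        _ ≤ ‖g Xs‖ + ‖g (X k) - g Xs‖ := norm_add_le _ _
    have h5 := mul_le_mul_of_nonneg_left h2 hL0
    rw [hGdef]; linarith
  -- the model decrease
  obtain ⟨D, hDdef⟩ : ∃ x : ℕ → ℝ, x = fun k => -(tinner (g (X k)) (V k) + h (X k + V k) - h (X k)) := ⟨_, rfl⟩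
  have hDk : ∀ k, D k = -(tinner (g (X k)) (V k) + h (X k + V k) - h (X k)) := fun _ => by rw [hDdef]
  have hquad : ∀ k, 0 ≤ tinner (V k) (B k (V k)) := fun k =>
    le_trans (mul_nonneg hκ₁.le (sq_nonneg _)) (hBbound k (V k) (hVt k)).1
  have hD0 : ∀ k, 0 ≤ D k := by
    intro k
    have hm := hmin k 0 (Aux.tangent_zero _)
    rw [map_zero, Aux.tinner_zero_right, Aux.tinner_zero_left, add_zero] at hm
    have hq := hquad k
    rw [hDk]; linarith
  -- Δ ≤ Γ
  have hΔleΓ : ∀ k, Δ k ≤ Γ k := by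
    intro k
    have hk : k ∈ Finset.Icc (k - m) k := Finset.mem_Icc.mpr ⟨Nat.sub_le k m, le_refl k⟩
    have h1 := Finset.le_sup' (fun j => f (X j) + h (X j)) hk
    rw [hΔk, hΓk]
    have h2 : S k = (Finset.Icc (k - m) k).sup'
      (Finset.nonempty_Icc.mpr (Nat.sub_le k m)) (fun j => f (X j) + h (X j)) := by rw [hSdef]
    rw [h2]
    exact sub_le_sub_right h1 Fs
  -- decrease of Γ by one step
  have hdecs : ∀ k, 0 ≤ σ / 2 * α k * tinner (V k) (B k (V k)) := by
    intro k
    obtain ⟨ha0, _⟩ := hα k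
    have : 0 < α k := lt_of_lt_of_le hc₀ ha0
    exact mul_nonneg (mul_nonneg (by linarith) this.le) (hquad k)
  have hΓstep : ∀ k, Γ (k + 1) ≤ Γ k := by
    intro k
    have hS : S (k + 1) ≤ S k := by
      simp only [hSdef]
      apply Finset.sup'_le
      intro j hj
      obtain ⟨hj1, hj2⟩ := Finset.mem_Icc.mp hj
      rcases Nat.lt_or_ge j (k + 1) with hcase | hcase
      · have hjk : j ∈ Finset.Icc (k - m) k := by
          apply Finset.mem_Icc.mpr
          omega
        exact Finset.le_sup' (fun j => f (X j) + h (X j)) hjk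
      · have hjeq : j = k + 1 := le_antisymm hj2 hcase
        subst hjeq
        have h1 := hdec k
        have h2 := hdecs k
        show f (X (k + 1)) + h (X (k + 1)) ≤ _
        linarith
    rw [hΓk, hΓk]
    linarith
  have hΓmono : ∀ k j, Γ (k + j) ≤ Γ k := by
    intro k j
    induction j with
    | zero => exact le_refl _
    | succ j ih => exact le_trans (hΓstep (k + j)) ih
  have hΓmono' : ∀ j k, k ≤ j → Γ j ≤ Γ k := by
    intro j k hkj
    have h1 := hΓmono k (j - k)
    rwa [Nat.add_sub_cancel' hkj] at h1
  -- nonnegativity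
  have hΔnn : ∀ k, K₀ ≤ k → 0 ≤ Δ k := by
    intro k hk
    have h1 := hW₂ k hk
    have h2 : 0 ≤ η * ‖W k‖ ^ 2 := mul_nonneg hηpos.le (sq_nonneg _)
    rw [hΔk]; linarith [hFsdef]
  have hΓnn : ∀ k, K₀ ≤ k → 0 ≤ Γ k := fun k hk => le_trans (hΔnn k hk) (hΔleΓ k)
  -- ===== P1 : one-step descent estimate =====
  have P1 : ∀ k, K ≤ k → f (X (k + 1)) + h (X (k + 1)) ≤
      (f (X k) + h (X k)) - α k * D k + (G * M₂ + L * M₁ ^ 2 + Lh * M₂) * ‖V k‖ ^ 2 := by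
    intro k hk
    obtain ⟨ha0, ha1⟩ := hα k
    have hapos : 0 < α k := lt_of_lt_of_le hc₀ ha0
    have hnsmul : ‖α k • V k‖ = α k * ‖V k‖ := by
      rw [norm_smul, Real.norm_eq_abs, abs_of_pos hapos]
    have hasq : (α k * ‖V k‖) ^ 2 ≤ ‖V k‖ ^ 2 := by
      nlinarith [mul_nonneg (mul_nonneg (sub_nonneg.mpr ha1) (by linarith : (0:ℝ) ≤ 1 + α k))
        (sq_nonneg ‖V k‖)]
    have hR : ‖X (k + 1) - X k - α k • V k‖ ≤ M₂ * ‖V k‖ ^ 2 := by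
      have h1 := hstep₂ k
      rw [hnsmul] at h1
      have h2 := mul_le_mul_of_nonneg_left hasq hM₂.le
      linarith only [h1, h2]
    have hXd : ‖X (k + 1) - X k‖ ≤ M₁ * ‖V k‖ := by
      have h1 := hstep₁ k
      rw [hnsmul] at h1
      have h2 : M₁ * (α k * ‖V k‖) ≤ M₁ * ‖V k‖ := by
        have := mul_nonneg (mul_nonneg hM₁.le (sub_nonneg.mpr ha1)) (norm_nonneg (V k))
        nlinarith
      linarith only [h1, h2]
    have hdes := Aux.descent f g Lf hf hGrad L hL0 hLipg (X k) (X (k + 1))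
    have hXd2 : L * ‖X (k + 1) - X k‖ ^ 2 ≤ L * (M₁ * ‖V k‖) ^ 2 := by
      have h1 := pow_le_pow_left₀ (norm_nonneg _) hXd 2
      exact mul_le_mul_of_nonneg_left h1 hL0
    have hsplit : tinner (g (X k)) (X (k + 1) - X k)
        = α k * tinner (g (X k)) (V k)
          + tinner (g (X k)) (X (k + 1) - X k - α k • V k) := by
      rw [← Aux.tinner_smul_right, ← Aux.tinner_add_right]
      congr 1
      abel
    have hgR : tinner (g (X k)) (X (k + 1) - X k - α k • V k) ≤ G * (M₂ * ‖V k‖ ^ 2) := by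
      calc tinner (g (X k)) (X (k + 1) - X k - α k • V k)
          ≤ ‖g (X k)‖ * ‖X (k + 1) - X k - α k • V k‖ := Aux.tinner_le _ _
        _ ≤ G * (M₂ * ‖V k‖ ^ 2) := mul_le_mul (hGbnd k hk) hR (norm_nonneg _) hG0
    have hfb : f (X (k + 1)) ≤ f (X k) + α k * tinner (g (X k)) (V k)
        + G * (M₂ * ‖V k‖ ^ 2) + L * (M₁ * ‖V k‖) ^ 2 := by
      rw [hsplit] at hdes
      linarith
    have hhb : h (X (k + 1)) ≤ h (X k + α k • V k) + Lh * (M₂ * ‖V k‖ ^ 2) := by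
      have h1 := hLiph (X (k + 1)) (X k + α k • V k)
      have e : X (k + 1) - (X k + α k • V k) = X (k + 1) - X k - α k • V k := by abel
      rw [e] at h1
      have h3 := mul_le_mul_of_nonneg_left hR hLh0
      have h4 := le_abs_self (h (X (k + 1)) - h (X k + α k • V k))
      linarith
    have hcvx : h (X k + α k • V k) ≤ (1 - α k) * h (X k) + α k * h (X k + V k) := by
      have hcc := hconv.2 (Set.mem_univ (X k)) (Set.mem_univ (X k + V k))
        (by linarith : (0:ℝ) ≤ 1 - α k) hapos.le (by ring)
      have e : (1 - α k) • X k + α k • (X k + V k) = X k + α k • V k := by module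
      rw [e] at hcc
      simpa [smul_eq_mul] using hcc
    rw [hDk]
    linarith only [hfb, hhb, hcvx]
  -- ===== hB : sufficient decrease =====
  have hB : ∀ k, σ / 2 * c₀ * κ₁ * ‖V k‖ ^ 2 ≤ Γ k - Δ (k + 1) := by
    intro k
    obtain ⟨ha0, ha1⟩ := hα k
    have hq1 := (hBbound k (V k) (hVt k)).1
    have hq0 := hquad k
    have s1 : σ / 2 * c₀ * (κ₁ * ‖V k‖ ^ 2) ≤ σ / 2 * c₀ * tinner (V k) (B k (V k)) :=
      mul_le_mul_of_nonneg_left hq1 (by positivity)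
    have s2 : σ / 2 * c₀ * tinner (V k) (B k (V k))
        ≤ σ / 2 * α k * tinner (V k) (B k (V k)) := by
      apply mul_le_mul_of_nonneg_right _ hq0
      nlinarith
    have h1 := hdec k
    have h3 : S k = (Finset.Icc (k - m) k).sup'
      (Finset.nonempty_Icc.mpr (Nat.sub_le k m)) (fun j => f (X j) + h (X j)) := by rw [hSdef]
    rw [← h3] at h1
    rw [hΔk, hΓk]
    linarith only [s1, s2, h1]
  -- ===== P3 : error bound estimate =====
  have P3 : ∀ k, K₀ ≤ k → c / 2 * Δ k ≤ D k + (κ₂ * s + κ₂) * ‖V k‖ ^ 2 := by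
    intro k hk
    have hWt' := hWt k hk
    have hVt' := hVt k
    have hi : Δ k ≤ -(tinner (g (X k)) (W k)) + h (X k) - h (X k + W k)
        + Lh * (M₂ * ‖W k‖ ^ 2) := by
      have e1 := hW₃ k hk
      have e2 := hLiph (X k + W k) Xs
      have e3 : X k + W k - Xs = -(Xs - X k - W k) := by abel
      have e4 : ‖X k + W k - Xs‖ = ‖Xs - X k - W k‖ := by rw [e3, norm_neg]
      rw [e4] at e2
      have e5 := mul_le_mul_of_nonneg_left (hW₁ k hk) hLh0
      have e6 := le_abs_self (h (X k + W k) - h Xs)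
      rw [hΔk]
      linarith [e2, e5, e6, e1, hFsdef]
    have hDt : IsTangent (X k) (W k - V k) := Aux.tangent_sub hWt' hVt'
    have hUt : IsTangent (X k) (V k + t • (W k - V k)) :=
      Aux.tangent_add hVt' (Aux.tangent_smul hDt t)
    have hm := hmin k (V k + t • (W k - V k)) hUt
    have hq : tinner (V k + t • (W k - V k)) (B k (V k + t • (W k - V k)))
        = tinner (V k) (B k (V k)) + 2 * t * tinner (B k (V k)) (W k - V k)
          + t ^ 2 * tinner (W k - V k) (B k (W k - V k)) := by
      rw [map_add, LinearMap.map_smul]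
      simp only [Aux.tinner_add_left, Aux.tinner_add_right, Aux.tinner_smul_left,
        Aux.tinner_smul_right]
      have e1 : tinner (V k) (B k (W k - V k)) = tinner (B k (V k)) (W k - V k) := hBsa k _ _
      have e2 : tinner (W k - V k) (B k (V k)) = tinner (B k (W k - V k)) (V k) := hBsa k _ _
      have e3 : tinner (B k (W k - V k)) (V k) = tinner (V k) (B k (W k - V k)) :=
        Aux.tinner_comm _ _
      rw [e1, e2, e3, e1]; ring
    have hgl : tinner (g (X k)) (V k + t • (W k - V k))
        = tinner (g (X k)) (V k) + t * tinner (g (X k)) (W k - V k) := by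
      rw [Aux.tinner_add_right, Aux.tinner_smul_right]
    have hcvx2 : h (X k + (V k + t • (W k - V k)))
        ≤ (1 - t) * h (X k + V k) + t * h (X k + W k) := by
      have hcc := hconv.2 (Set.mem_univ (X k + V k)) (Set.mem_univ (X k + W k))
        (by linarith : (0:ℝ) ≤ 1 - t) ht0.le (by ring)
      have e : (1 - t) • (X k + V k) + t • (X k + W k) = X k + (V k + t • (W k - V k)) := by
        module
      rw [e] at hcc
      simpa [smul_eq_mul] using hcc
    have hkey : 0 ≤ tinner (g (X k)) (W k - V k) + tinner (B k (V k)) (W k - V k)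
        + t / 2 * tinner (W k - V k) (B k (W k - V k))
        + h (X k + W k) - h (X k + V k) := by
      rw [hq, hgl] at hm
      by_contra hcon
      push_neg at hcon
      nlinarith [hm, hcvx2, ht0, hcon, hq, hgl]
    have hb1 : tinner (B k (V k)) (W k - V k) ≤ tinner (B k (V k)) (W k) := by
      rw [Aux.tinner_sub_right]
      have h1 : 0 ≤ tinner (B k (V k)) (V k) := by
        rw [Aux.tinner_comm]; exact hquad k
      linarith
    have hlow : ∀ W', IsTangent (X k) W' → 0 ≤ tinner W' (B k W') := fun W' hw =>
      le_trans (mul_nonneg hκ₁.le (sq_nonneg _)) (hBbound k W' hw).1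
    have hupp : ∀ W', IsTangent (X k) W' → tinner W' (B k W') ≤ κ₂ * ‖W'‖ ^ 2 := fun W' hw =>
      (hBbound k W' hw).2
    have hb2 : tinner (B k (V k)) (W k) ≤ κ₂ * (s * ‖V k‖ ^ 2 + s⁻¹ * ‖W k‖ ^ 2) :=
      Aux.bilin_bound (B k) κ₂ (hBsa k) (hBtan k) hlow hupp hVt' hWt' hs0 hκ₂pos.le
    have hb3 : tinner (W k - V k) (B k (W k - V k)) ≤ κ₂ * ‖W k - V k‖ ^ 2 := hupp _ hDt
    have hb4 : ‖W k - V k‖ ^ 2 ≤ 2 * ‖V k‖ ^ 2 + 2 * ‖W k‖ ^ 2 := by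
      have h1 := norm_sub_le (W k) (V k)
      have h2 : ‖W k - V k‖ ^ 2 ≤ (‖W k‖ + ‖V k‖) ^ 2 :=
        pow_le_pow_left₀ (norm_nonneg _) h1 2
      nlinarith [h2, sq_nonneg (‖W k‖ - ‖V k‖)]
    have hb5 : t / 2 * tinner (W k - V k) (B k (W k - V k))
        ≤ κ₂ * ‖V k‖ ^ 2 + c * η / 4 * ‖W k‖ ^ 2 := by
      have h1 : tinner (W k - V k) (B k (W k - V k)) ≤ κ₂ * (2 * ‖V k‖ ^ 2 + 2 * ‖W k‖ ^ 2) :=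
        le_trans hb3 (mul_le_mul_of_nonneg_left hb4 hκ₂pos.le)
      have h2 := mul_le_mul_of_nonneg_left h1 (by positivity : (0:ℝ) ≤ t / 2)
      have h3 : t * κ₂ * ‖V k‖ ^ 2 ≤ κ₂ * ‖V k‖ ^ 2 :=
        mul_le_mul_of_nonneg_right (mul_le_of_le_one_left hκ₂pos.le ht1) (sq_nonneg _)
      have h4 : t * κ₂ * ‖W k‖ ^ 2 ≤ c * η / 4 * ‖W k‖ ^ 2 :=
        mul_le_mul_of_nonneg_right htκ (sq_nonneg _)
      linarith only [h2, h3, h4]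
    have hb6 : κ₂ * s⁻¹ * ‖W k‖ ^ 2 = c * η / 4 * ‖W k‖ ^ 2 := by rw [hsinv]
    have hb7 : (1 - c / 2) * (η * ‖W k‖ ^ 2) ≤ (1 - c / 2) * Δ k := by
      have hW2' : η * ‖W k‖ ^ 2 ≤ Δ k := by rw [hΔk, hFsdef]; exact hW₂ k hk
      have hcc : (0:ℝ) ≤ 1 - c / 2 := by linarith only [hc1]
      exact mul_le_mul_of_nonneg_left hW2' hcc
    have hb8 : Lh * (M₂ * ‖W k‖ ^ 2) = (1 - c) * (η * ‖W k‖ ^ 2) := by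
      linear_combination (-(‖W k‖ ^ 2)) * hcη
    have hto : tinner (g (X k)) (W k - V k)
        = tinner (g (X k)) (W k) - tinner (g (X k)) (V k) := Aux.tinner_sub_right _ _ _
    rw [hDk]
    linarith only [hi, hkey, hto, hb1, hb2, hb5, hb6, hb7, hb8]
  -- ===== combined constants =====
  obtain ⟨β, hβdef⟩ : ∃ x : ℝ, x = σ / 2 * c₀ * κ₁ := ⟨_, rfl⟩
  have hβ0 : 0 < β := by
    rw [hβdef]
    have h1 : (0:ℝ) < σ / 2 := by linarith
    exact mul_pos (mul_pos h1 hc₀) hκ₁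
  obtain ⟨CC, hCCdef⟩ : ∃ x : ℝ, x = (G * M₂ + L * M₁ ^ 2 + Lh * M₂) + c₀ * (κ₂ * s + κ₂) :=
    ⟨_, rfl⟩
  have hCC0 : 0 < CC := by
    rw [hCCdef]
    have h1 : 0 ≤ G * M₂ := mul_nonneg hG0 hM₂.le
    have h2 : 0 ≤ L * M₁ ^ 2 := mul_nonneg hL0 (sq_nonneg _)
    have h3 : 0 ≤ Lh * M₂ := mul_nonneg hLh0 hM₂.le
    have h4 : 0 < κ₂ * s + κ₂ := by linarith only [mul_pos hκ₂pos hs0, hκ₂pos]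
    linarith only [h1, h2, h3, mul_pos hc₀ h4]
  obtain ⟨θ, hθdef⟩ : ∃ x : ℝ, x = CC / β := ⟨_, rfl⟩
  have hθ0 : 0 < θ := by rw [hθdef]; exact div_pos hCC0 hβ0
  -- rephrase hB with β
  have hB' : ∀ k, β * ‖V k‖ ^ 2 ≤ Γ k - Δ (k + 1) := by
    intro k
    rw [hβdef]
    exact hB k
  -- ===== master per-step inequality =====
  have hA : ∀ k, K ≤ k → c₀ * (c / 2) * Δ k ≤ (Δ k - Δ (k + 1)) + CC * ‖V k‖ ^ 2 := by
    intro k hk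
    have h1 := P1 k hk
    have h2 := P3 k (le_trans hKK₀ hk)
    obtain ⟨ha0, ha1⟩ := hα k
    have h3 : c₀ * D k ≤ α k * D k := mul_le_mul_of_nonneg_right ha0 (hD0 k)
    have h4 := mul_le_mul_of_nonneg_left h2 hc₀.le
    have h5 := hΔk k
    have h6 := hΔk (k + 1)
    rw [hCCdef]
    linarith only [h1, h3, h4, h5, h6]
  have hCV : ∀ k, CC * ‖V k‖ ^ 2 ≤ θ * (Γ k - Δ (k + 1)) := by
    intro k
    have e1 : CC * ‖V k‖ ^ 2 = θ * (β * ‖V k‖ ^ 2) := by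
      rw [hθdef]
      field_simp
    rw [e1]
    exact mul_le_mul_of_nonneg_left (hB' k) hθ0.le
  -- ===== the two recursions =====
  obtain ⟨c₈, hc₈def⟩ : ∃ x : ℝ, x = min (c₀ * c / (2 * (1 + θ))) 1 := ⟨_, rfl⟩
  have hc₈0 : 0 < c₈ := by
    rw [hc₈def]
    exact lt_min (div_pos (mul_pos hc₀ hc0) (by linarith)) one_pos
  have hc₈1 : c₈ ≤ 1 := by rw [hc₈def]; exact min_le_right _ _
  have hI : ∀ k, K ≤ k → Δ (k + 1) ≤ Γ k - c₈ * Δ k := by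
    intro k hk
    have h1 := hA k hk
    have h4 := hCV k
    have h3 := hΔleΓ k
    have hΔnnk : 0 ≤ Δ k := hΔnn k (le_trans hKK₀ hk)
    have h5 : c₀ * (c / 2) * Δ k ≤ (1 + θ) * (Γ k - Δ (k + 1)) := by
      linarith only [h1, h4, h3]
    have h7 : c₈ ≤ c₀ * c / (2 * (1 + θ)) := by rw [hc₈def]; exact min_le_left _ _
    have h8 : c₈ * Δ k ≤ (c₀ * c / (2 * (1 + θ))) * Δ k :=
      mul_le_mul_of_nonneg_right h7 hΔnnk
    have h9 : (c₀ * c / (2 * (1 + θ))) * Δ k ≤ Γ k - Δ (k + 1) := by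
      rw [div_mul_eq_mul_div, div_le_iff₀ (by linarith : (0:ℝ) < 2 * (1 + θ))]
      linarith only [h5]
    linarith only [h8, h9]
  have hII : ∀ k, K ≤ k → (1 + θ) * Δ (k + 1) ≤ Δ k + θ * Γ k := by
    intro k hk
    have h1 := hA k hk
    have h4 := hCV k
    have hΔnnk : 0 ≤ Δ k := hΔnn k (le_trans hKK₀ hk)
    have h2 : 0 ≤ c₀ * (c / 2) * Δ k :=
      mul_nonneg (mul_nonneg hc₀.le (by linarith)) hΔnnk
    linarith only [h1, h4, h2]
  -- ===== window contraction =====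
  obtain ⟨ρ, hρdef⟩ : ∃ x : ℝ, x = max (1 - c₈ / 2) ((1/2 + θ) / (1 + θ)) := ⟨_, rfl⟩
  have hρ1 : ρ < 1 := by
    rw [hρdef]
    apply max_lt
    · linarith
    · rw [div_lt_one (by linarith)]; linarith
  have hρh : 1 - c₈ / 2 ≤ ρ := by rw [hρdef]; exact le_max_left _ _
  have hρh2 : (1/2 + θ) / (1 + θ) ≤ ρ := by rw [hρdef]; exact le_max_right _ _
  have hρhalf : 1/2 ≤ ρ := le_trans (by linarith) hρh
  have hρ0 : 0 ≤ ρ := by linarith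
  have hwin : ∀ k, K ≤ k → Γ (k + (m + 1)) ≤ ρ * Γ k := by
    intro k hk
    have hΓnnk : 0 ≤ Γ k := hΓnn k (le_trans hKK₀ hk)
    obtain ⟨j, hjmem, hjeq⟩ := Finset.exists_mem_eq_sup'
      (Finset.nonempty_Icc.mpr (Nat.sub_le (k + (m + 1)) m)) (fun j => f (X j) + h (X j))
    obtain ⟨hj1, hj2⟩ := Finset.mem_Icc.mp hjmem
    obtain ⟨i, rfl⟩ : ∃ i, j = i + 1 := ⟨j - 1, by omega⟩
    have hik : K ≤ i := by omega
    have hΓeq : Γ (k + (m + 1)) = Δ (i + 1) := by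
      rw [hΓk, hΔk]
      have e : S (k + (m + 1)) = f (X (i + 1)) + h (X (i + 1)) := by rw [hSdef]; exact hjeq
      rw [e]
    have hΓik : Γ i ≤ Γ k := hΓmono' i k (by omega)
    rcases le_or_gt (Γ k / 2) (Δ i) with hcase | hcase
    · have h1 := hI i hik
      have h2 : c₈ * (Γ k / 2) ≤ c₈ * Δ i := mul_le_mul_of_nonneg_left hcase hc₈0.le
      have h3 : (1 - c₈ / 2) * Γ k ≤ ρ * Γ k := mul_le_mul_of_nonneg_right hρh hΓnnk
      rw [hΓeq]
      linarith only [h1, h2, h3, hΓik]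
    · have h1 := hII i hik
      have h2 : θ * Γ i ≤ θ * Γ k := mul_le_mul_of_nonneg_left hΓik hθ0.le
      have h3 : ((1/2 + θ) / (1 + θ)) * Γ k ≤ ρ * Γ k := mul_le_mul_of_nonneg_right hρh2 hΓnnk
      have h4 : (1 + θ) * Δ (i + 1) ≤ (1/2 + θ) * Γ k := by linarith only [h1, h2, hcase]
      have h5 : Δ (i + 1) ≤ ((1/2 + θ) / (1 + θ)) * Γ k := by
        rw [div_mul_eq_mul_div, le_div_iff₀ (by linarith : (0:ℝ) < 1 + θ)]
        linarith only [h4]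
      rw [hΓeq]
      linarith only [h5, h3]
  -- ===== geometric decay =====
  have hdecay : ∀ d, Γ (K + d) ≤ ρ ^ (d / (m + 1)) * Γ K := by
    intro d
    induction d using Nat.strong_induction_on with
    | _ d ih =>
      rcases Nat.lt_or_ge d (m + 1) with hd | hd
      · rw [Nat.div_eq_of_lt hd, pow_zero, one_mul]
        exact hΓmono K d
      · have hlt : d - (m + 1) < d := by omega
        have h1 := hwin (K + (d - (m + 1))) (Nat.le_add_right _ _)
        have h2 := ih (d - (m + 1)) hlt
        have e1 : K + (d - (m + 1)) + (m + 1) = K + d := by omega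
        rw [e1] at h1
        have e2 : d / (m + 1) = (d - (m + 1)) / (m + 1) + 1 := by
          conv_lhs => rw [← Nat.sub_add_cancel hd]
          rw [Nat.add_div_right _ (Nat.succ_pos m)]
        rw [e2, pow_succ]
        have h3 := mul_le_mul_of_nonneg_left h2 hρ0
        calc Γ (K + d) ≤ ρ * Γ (K + (d - (m + 1))) := h1
          _ ≤ ρ * (ρ ^ ((d - (m + 1)) / (m + 1)) * Γ K) := h3
          _ = ρ ^ ((d - (m + 1)) / (m + 1)) * ρ * Γ K := by ring
  -- ===== the rate τ =====
  obtain ⟨τ, hτdef⟩ : ∃ x : ℝ, x = 1 - (1 - ρ) / ((m:ℝ) + 1) := ⟨_, rfl⟩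
  have hm1 : (0:ℝ) < (m:ℝ) + 1 := by positivity
  have hfrac : (1 - ρ) / ((m:ℝ) + 1) ≤ 1 - ρ := by
    apply div_le_self (by linarith)
    have := Nat.cast_nonneg (α := ℝ) m
    linarith
  have hτ0 : 0 < τ := by
    rw [hτdef]
    linarith
  have hτ1 : τ < 1 := by
    rw [hτdef]
    have h1 : 0 < (1 - ρ) / ((m:ℝ) + 1) := div_pos (by linarith) hm1
    linarith
  have hρτ : ρ ≤ τ ^ (m + 1) := by
    have ha2 : (-2:ℝ) ≤ -((1 - ρ) / ((m:ℝ) + 1)) := by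
      have h1 : 0 < (1 - ρ) / ((m:ℝ) + 1) := div_pos (by linarith) hm1
      linarith
    have hb := one_add_mul_le_pow ha2 (m + 1)
    have e1 : 1 + ((m + 1 : ℕ) : ℝ) * -((1 - ρ) / ((m:ℝ) + 1)) = ρ := by
      push_cast
      field_simp
      ring
    have e2 : (1:ℝ) + -((1 - ρ) / ((m:ℝ) + 1)) = τ := by rw [hτdef]; ring
    rw [e1, e2] at hb
    exact hb
  -- ===== conclusion =====
  refine ⟨K, hKK₀, τ⁻¹ ^ (m + 1), τ, pow_pos (inv_pos.mpr hτ0) _, ⟨hτ0, hτ1⟩, ?_⟩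
  intro k hk
  have hd : K + (k - K) = k := by omega
  have h1 : Δ k ≤ Γ k := hΔleΓ k
  have h2 := hdecay (k - K)
  rw [hd] at h2
  have hΓKnn : 0 ≤ Γ K := hΓnn K hKK₀
  have h3 : ρ ^ ((k - K) / (m + 1)) ≤ (τ ^ (m + 1)) ^ ((k - K) / (m + 1)) :=
    pow_le_pow_left₀ hρ0 hρτ _
  rw [← pow_mul] at h3
  have h4 : τ ^ ((m + 1) * ((k - K) / (m + 1))) ≤ τ ^ (k - K - (m + 1)) := by
    apply pow_le_pow_of_le_one hτ0.le hτ1.le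
    have hq := Nat.div_add_mod (k - K) (m + 1)
    have hmod : (k - K) % (m + 1) < m + 1 := Nat.mod_lt _ (Nat.succ_pos m)
    omega
  have h5 : τ ^ (k - K - (m + 1)) ≤ τ⁻¹ ^ (m + 1) * τ ^ (k - K) := by
    have e3 : τ⁻¹ ^ (m + 1) * τ ^ (k - K) = τ ^ (k - K) / τ ^ (m + 1) := by
      rw [inv_pow]; ring
    rw [e3, le_div_iff₀ (pow_pos hτ0 _), ← pow_add]
    apply pow_le_pow_of_le_one hτ0.le hτ1.le
    omega
  have h6 : ρ ^ ((k - K) / (m + 1)) * Γ K ≤ τ⁻¹ ^ (m + 1) * τ ^ (k - K) * Γ K :=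
    mul_le_mul_of_nonneg_right (le_trans h3 (le_trans h4 h5)) hΓKnn
  have h7 : Δ k ≤ τ⁻¹ ^ (m + 1) * τ ^ (k - K) * Γ K := by linarith only [h1, h2, h6]
  rw [hΔk, hΓk, hFsdef] at h7
  have e4 : S K = (Finset.Icc (K - m) K).sup'
      (Finset.nonempty_Icc.mpr (Nat.sub_le K m)) (fun j => f (X j) + h (X j)) := by
    rw [hSdef]
  rw [e4] at h7
  exact h7
end

section
/- Let (F_k)_{k≥0} be a sequence of real numbers, let m be a nonnegative integer, and define M_k := max_{max(k−m,0) ≤ j ≤ k} F_j. If F_{k+1} ≤ M_k for all k, then the sequence (M_k) is nonincreasing; consequently, if (F_k) is bounded below, then (M_k) converges. -/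
open Filter

theorem stmt14 (F : ℕ → ℝ) (m : ℕ)
    -- `M_k` is the sliding-window maximum `max_{max(k-m,0) ≤ j ≤ k} F_j`
    (M : ℕ → ℝ)
    (hM : ∀ k, M k =
      (Finset.Icc (k - m) k).sup' (Finset.nonempty_Icc.mpr (Nat.sub_le k m)) F)
    (hdec : ∀ k, F (k + 1) ≤ M k) :
    (∀ k, M (k + 1) ≤ M k) ∧
      ((∃ b : ℝ, ∀ k, b ≤ F k) → ∃ l : ℝ, Tendsto M atTop (nhds l)) := by
  have hmono : ∀ k, M (k + 1) ≤ M k := by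
    intro k
    rw [hM (k + 1)]
    apply Finset.sup'_le
    intro j hj
    simp only [Finset.mem_Icc] at hj
    rcases Nat.lt_or_ge j (k + 1) with h | h
    · -- j ≤ k, and j ≥ k+1-m ≥ k-m
      have hjk : j ≤ k := Nat.lt_succ_iff.mp h
      have hjl : k - m ≤ j := le_trans (Nat.sub_le_sub_right (Nat.le_succ k) m) hj.1
      rw [hM k]
      exact Finset.le_sup' F (Finset.mem_Icc.mpr ⟨hjl, hjk⟩)
    · have : j = k + 1 := le_antisymm hj.2 h
      rw [this]
      exact hdec k
  refine ⟨hmono, ?_⟩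
  rintro ⟨b, hb⟩
  have hant : Antitone M := antitone_nat_of_succ_le hmono
  have hbdd : BddBelow (Set.range M) := by
    refine ⟨b, ?_⟩
    rintro _ ⟨k, rfl⟩
    have : F k ≤ M k := by
      rw [hM k]
      exact Finset.le_sup' F (Finset.mem_Icc.mpr ⟨Nat.sub_le k m, le_refl k⟩)
    exact le_trans (hb k) this
  exact ⟨⨅ k, M k, tendsto_atTop_ciInf hant hbdd⟩
end

section
/- Let (r_k)_{k≥0} be a sequence of nonnegative real numbers, let m be a nonnegative integer, let ν ∈ (0,1), and let K be an index. If r_{k+1} ≤ ν · max_{max(k−m,0) ≤ j ≤ k} r_j for all k ≥ K, then there exist μ > 0 and τ ∈ (0,1) such that r_k ≤ μ τ^{k−K} · max_{max(K−m,0) ≤ j ≤ K} r_j for all k ≥ K. -/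
theorem stmt15 (r : ℕ → ℝ) (hr : ∀ k, 0 ≤ r k) (m : ℕ)
    (ν : ℝ) (hν : ν ∈ Set.Ioo (0 : ℝ) 1) (K : ℕ)
    -- nonmonotone (GLL-type) recursion from index `K` on
    (hrec : ∀ k, K ≤ k →
      r (k + 1) ≤ ν * (Finset.Icc (k - m) k).sup'
        (Finset.nonempty_Icc.mpr (Nat.sub_le k m)) r) :
    -- R-linear convergence of `(r_k)`
    ∃ μ τ : ℝ, 0 < μ ∧ τ ∈ Set.Ioo (0 : ℝ) 1 ∧
      ∀ k, K ≤ k →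
        r k ≤ μ * τ ^ (k - K) *
          (Finset.Icc (K - m) K).sup' (Finset.nonempty_Icc.mpr (Nat.sub_le K m)) r := by
  obtain ⟨hν0, hν1⟩ := hν
  set M := (Finset.Icc (K - m) K).sup' (Finset.nonempty_Icc.mpr (Nat.sub_le K m)) r with hMdef
  have hM0 : 0 ≤ M :=
    le_trans (hr K) (Finset.le_sup' r (by rw [Finset.mem_Icc]; omega))
  have key : ∀ k, K ≤ k → (Finset.Icc (k - m) k).sup'
      (Finset.nonempty_Icc.mpr (Nat.sub_le k m)) r ≤ ν ^ ((k - K) / (m + 1)) * M := by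
    intro k
    induction k using Nat.strong_induction_on with
    | _ k ih =>
      intro hk
      apply Finset.sup'_le
      intro j hj
      rw [Finset.mem_Icc] at hj
      obtain ⟨hj1, hj2⟩ := hj
      by_cases hjK : j ≤ K
      · have hexp : (k - K) / (m + 1) = 0 := Nat.div_eq_of_lt (by omega)
        rw [hexp, pow_zero, one_mul]
        exact Finset.le_sup' r (by rw [Finset.mem_Icc]; omega)
      · push_neg at hjK
        have hj1' : j = (j - 1) + 1 := by omega
        have hKj : K ≤ j - 1 := by omega
        have hrj : r j ≤ ν * ((Finset.Icc (j - 1 - m) (j - 1)).sup'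
            (Finset.nonempty_Icc.mpr (Nat.sub_le (j - 1) m)) r) := by
          rw [hj1']; exact hrec (j - 1) hKj
        have ih' := ih (j - 1) (by omega) hKj
        have h2 : r j ≤ ν * (ν ^ ((j - 1 - K) / (m + 1)) * M) :=
          hrj.trans (mul_le_mul_of_nonneg_left ih' hν0.le)
        refine h2.trans ?_
        rw [← mul_assoc, ← pow_succ']
        refine mul_le_mul_of_nonneg_right ?_ hM0
        apply pow_le_pow_of_le_one hν0.le hν1.le
        calc (k - K) / (m + 1) ≤ ((j - 1 - K) + (m + 1)) / (m + 1) :=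
              Nat.div_le_div_right (by omega)
          _ = (j - 1 - K) / (m + 1) + 1 := Nat.add_div_right _ (by omega)
  refine ⟨1 / ν, ν ^ ((1 : ℝ) / (m + 1)), by positivity,
    ⟨Real.rpow_pos_of_pos hν0 _, Real.rpow_lt_one hν0.le hν1 (by positivity)⟩, ?_⟩
  intro k hk
  have h1 : r k ≤ ν ^ ((k - K) / (m + 1)) * M :=
    le_trans (Finset.le_sup' r (by rw [Finset.mem_Icc]; omega)) (key k hk)
  refine h1.trans (mul_le_mul_of_nonneg_right ?_ hM0)
  set i := k - K with hi
  set t := i / (m + 1) with ht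
  have hpow : (ν ^ ((1 : ℝ) / (m + 1))) ^ i = ν ^ ((i : ℝ) / (m + 1)) := by
    rw [← Real.rpow_natCast (ν ^ ((1 : ℝ) / (m + 1))) i, ← Real.rpow_mul hν0.le]
    ring_nf
  rw [hpow]
  have hnat : i ≤ (m + 1) * t + m := by
    have h := Nat.div_add_mod i (m + 1)
    have h2 : i % (m + 1) < m + 1 := Nat.mod_lt _ (by omega)
    rw [← ht] at h
    omega
  have hle : (i : ℝ) / (m + 1) ≤ (t : ℝ) + 1 := by
    rw [div_le_iff₀ (by positivity)]
    have : (i : ℝ) ≤ (m + 1) * t + m := by exact_mod_cast hnat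
    nlinarith
  have h3 : ν * ν ^ t ≤ ν ^ ((i : ℝ) / (m + 1)) := by
    have h := Real.rpow_le_rpow_of_exponent_ge hν0 hν1.le hle
    rwa [show ((t : ℝ) + 1) = ((t + 1 : ℕ) : ℝ) by push_cast; ring,
      Real.rpow_natCast, pow_succ'] at h
  calc ν ^ t = 1 / ν * (ν * ν ^ t) := by field_simp
    _ ≤ 1 / ν * ν ^ ((i : ℝ) / (m + 1)) :=
        mul_le_mul_of_nonneg_left h3 (by positivity)
end

section
/- Let X ∈ St(n,r), X* ∈ ℝ^{n×r}, W ∈ T_X, let f : ℝ^{n×r} → ℝ be differentiable at X, let h : ℝ^{n×r} → ℝ be convex and L_h-Lipschitz, set F := f + h, and let B : ℝ^{n×r} → ℝ^{n×r} be self-adjoint for the trace inner product, map T_X into itself, and satisfy ⟨V,BV⟩ ≤ κ₂‖V‖² for all V ∈ T_X. Define φ(V) := ⟨∇f(X),V⟩ + (1/2)⟨V,BV⟩ + h(X+V). If f(X*) − f(X) ≥ ⟨∇f(X), W⟩ and ‖X* − X − W‖ ≤ M₂‖W‖² for some M₂ > 0, then for every θ ∈ [0,1]: f(X) + φ(θW)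 ≤ θ F(X*) + (1−θ) F(X) + ((1/2)θ²κ₂ + θ L_h M₂)‖W‖². In particular, f(X) + inf_{V ∈ T_X} φ(V) is bounded above by the right-hand side for every θ ∈ [0,1]. -/
open Matrix

-- The norm `‖·‖` below is the Frobenius norm, associated to the trace inner product.
attribute [local instance] Matrix.frobeniusNormedAddCommGroup Matrix.frobeniusNormedSpace

theorem stmt16 {n r : ℕ} (X : Matrix (Fin n) (Fin r) ℝ) (hX : Xᵀ * X = 1)
    (Xs W : Matrix (Fin n) (Fin r) ℝ) (hW : IsTangent X W)
    (f h : Matrix (Fin n) (Fin r) ℝ → ℝ)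
    -- `f` is differentiable at `X` with (Euclidean) gradient `G = ∇f(X)`
    (G : Matrix (Fin n) (Fin r) ℝ) (Lf : Matrix (Fin n) (Fin r) ℝ →L[ℝ] ℝ)
    (hf : HasFDerivAt f Lf X) (hGrad : ∀ V, Lf V = tinner G V)
    -- `h` is convex and `L_h`-Lipschitz
    (Lh : ℝ) (hconv : ConvexOn ℝ Set.univ h)
    (hLiph : ∀ A B, |h A - h B| ≤ Lh * ‖A - B‖)
    -- `B` is linear, self-adjoint for the trace inner product, maps `T_X` into itself,
    -- and satisfies `⟨V,BV⟩ ≤ κ₂‖V‖²` on `T_X`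
    (κ₂ : ℝ)
    (B : Matrix (Fin n) (Fin r) ℝ →ₗ[ℝ] Matrix (Fin n) (Fin r) ℝ)
    (hBsa : ∀ U V, tinner U (B V) = tinner (B U) V)
    (hBtan : ∀ V, IsTangent X V → IsTangent X (B V))
    (hBup : ∀ V, IsTangent X V → tinner V (B V) ≤ κ₂ * ‖V‖ ^ 2)
    -- the objective `φ(V) = ⟨∇f(X),V⟩ + (1/2)⟨V,BV⟩ + h(X+V)`
    (φ : Matrix (Fin n) (Fin r) ℝ → ℝ)
    (hφ : ∀ V, φ V = tinner G V + (1 / 2) * tinner V (B V) + h (X + V))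
    (M₂ : ℝ) (hM₂ : 0 < M₂)
    (h1 : tinner G W ≤ f Xs - f X)
    (h2 : ‖Xs - X - W‖ ≤ M₂ * ‖W‖ ^ 2) :
    (∀ θ : ℝ, θ ∈ Set.Icc (0 : ℝ) 1 →
      f X + φ (θ • W) ≤
        θ * (f Xs + h Xs) + (1 - θ) * (f X + h X) +
          ((1 / 2) * θ ^ 2 * κ₂ + θ * Lh * M₂) * ‖W‖ ^ 2) ∧
    -- in particular, `f(X) + inf_{V ∈ T_X} φ(V)` is bounded above by the same right-hand side
    (∀ θ : ℝ, θ ∈ Set.Icc (0 : ℝ) 1 →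
      ∃ V, IsTangent X V ∧
        f X + φ V ≤
          θ * (f Xs + h Xs) + (1 - θ) * (f X + h X) +
            ((1 / 2) * θ ^ 2 * κ₂ + θ * Lh * M₂) * ‖W‖ ^ 2) := by
  have main : ∀ θ : ℝ, θ ∈ Set.Icc (0 : ℝ) 1 →
      f X + φ (θ • W) ≤
        θ * (f Xs + h Xs) + (1 - θ) * (f X + h X) +
          ((1 / 2) * θ ^ 2 * κ₂ + θ * Lh * M₂) * ‖W‖ ^ 2 := by
    intro θ hθ
    obtain ⟨hθ0, hθ1⟩ := hθ
    -- tinner linearity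
    have t1 : tinner G (θ • W) = θ * tinner G W := by
      simp [tinner, Matrix.mul_smul, Matrix.trace_smul, smul_eq_mul]
    have t2 : tinner (θ • W) (B (θ • W)) = θ * θ * tinner W (B W) := by
      rw [_root_.map_smul]
      simp [tinner, Matrix.transpose_smul, Matrix.smul_mul, Matrix.mul_smul,
        Matrix.trace_smul, smul_eq_mul]
      ring
    -- quadratic term bound
    have hq : tinner W (B W) ≤ κ₂ * ‖W‖ ^ 2 := hBup W hW
    -- Lipschitz key bound
    have hkey : Lh * ‖Xs - X - W‖ ≤ Lh * (M₂ * ‖W‖ ^ 2) := by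
      rcases le_or_gt 0 Lh with hLh | hLh
      · exact mul_le_mul_of_nonneg_left h2 hLh
      · have hz : ∀ A : Matrix (Fin n) (Fin r) ℝ, ‖A‖ = 0 := by
          intro A
          have h0 := hLiph A 0
          rw [sub_zero] at h0
          have := abs_nonneg (h A - h 0)
          nlinarith [norm_nonneg A]
        simp [hz]
    -- convexity bound
    have hcvx : h (θ • Xs + (1 - θ) • X) ≤ θ * h Xs + (1 - θ) * h X := by
      have h10 : (0:ℝ) ≤ 1 - θ := by linarith
      have h11 : θ + (1 - θ) = 1 := by ring
      have := hconv.2 (Set.mem_univ Xs) (Set.mem_univ X) hθ0 h10 h11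
      simpa only [smul_eq_mul] using this
    -- norm of the difference
    have hdiff : (X + θ • W) - (θ • Xs + (1 - θ) • X) = (-θ) • (Xs - X - W) := by
      module
    have hnorm : ‖(X + θ • W) - (θ • Xs + (1 - θ) • X)‖ = θ * ‖Xs - X - W‖ := by
      rw [hdiff, norm_smul, Real.norm_eq_abs, abs_neg, abs_of_nonneg hθ0]
    have hlip : h (X + θ • W) ≤ h (θ • Xs + (1 - θ) • X) + Lh * (θ * ‖Xs - X - W‖) := by
      have := hLiph (X + θ • W) (θ • Xs + (1 - θ) • X)
      rw [hnorm] at this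
      have h3 := abs_le.mp this
      linarith [h3.2]
    have hθLh : θ * (Lh * ‖Xs - X - W‖) ≤ θ * (Lh * (M₂ * ‖W‖ ^ 2)) :=
      mul_le_mul_of_nonneg_left hkey hθ0
    rw [hφ, t1, t2]
    nlinarith [mul_le_mul_of_nonneg_left h1 hθ0, sq_nonneg θ,
      mul_le_mul_of_nonneg_left hq (mul_nonneg (mul_nonneg hθ0 hθ0) (by norm_num : (0:ℝ) ≤ 1/2))]
  refine ⟨main, fun θ hθ => ⟨θ • W, ?_, main θ hθ⟩⟩
  unfold IsTangent at hW ⊢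
  rw [Matrix.transpose_smul, Matrix.smul_mul, Matrix.mul_smul, ← smul_add, hW, smul_zero]
end
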